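/- Suppose A ∈ SPD and −C ∈ SPD, and let D, G be as in the two-block formulation. If ((y,x), λ) solves SEiCP(G,D) (so that v = 0, y = λx, λ > 0), then ((1+λ)x, λ) solves the symmetric quadratic eigenvalue complementarity problem: writing x̄ = (1+λ)x and w̄ = λ²Ax̄ + λBx̄ + Cx̄, one has x̄ ≥ 0, w̄ ≥ 0, x̄ᵀw̄ = 0, and eᵀx̄ = 1. -/

import Mathlib

open Matrix

theorem seicp_GD_to_sqeicp (n : ℕ) (A B C : Matrix (Fin n) (Fin n) ℝ)
    (hA : A.PosDef) (hC : (-C).PosDef) (hB : B.IsSymm)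
    (x y v w : Fin n → ℝ) (l : ℝ)
    (D : Matrix (Fin n ⊕ Fin n) (Fin n ⊕ Fin n) ℝ)
    (hD : D = Matrix.fromBlocks A 0 0 (-C))
    (G : Matrix (Fin n ⊕ Fin n) (Fin n ⊕ Fin n) ℝ)
    (hG : G = Matrix.fromBlocks (-B) (-C) (-C) 0)
    (heq : l • D.mulVec (Sum.elim y x) - G.mulVec (Sum.elim y x) = Sum.elim w v)
    (hsum : (∑ i, y i) + (∑ i, x i) = 1)
    (hcomp : y ⬝ᵥ w + x ⬝ᵥ v = 0)
    (hx : ∀ i, 0 ≤ x i) (hy : ∀ i, 0 ≤ y i)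
    (hv : ∀ i, 0 ≤ v i) (hw : ∀ i, 0 ≤ w i) (hl : 0 ≤ l)
    (xbar wbar : Fin n → ℝ)
    (hxbar : xbar = (1 + l) • x)
    (hwbar : wbar = l ^ 2 • A.mulVec xbar + l • B.mulVec xbar + C.mulVec xbar) :
    (∀ i, 0 ≤ xbar i) ∧ (∀ i, 0 ≤ wbar i) ∧ xbar ⬝ᵥ wbar = 0 ∧ ∑ i, xbar i = 1 := by
  subst hD hG hxbar hwbar
  -- block equations
  have hw' : w = l • A.mulVec y + B.mulVec y + C.mulVec x := by
    funext i
    have h := congrFun heq (Sum.inl i)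
    simp [Matrix.fromBlocks_mulVec, Matrix.neg_mulVec, Matrix.zero_mulVec] at h
    simp only [Pi.add_apply, Pi.smul_apply, smul_eq_mul]
    linarith
  have hv' : v = C.mulVec y - l • C.mulVec x := by
    funext i
    have h := congrFun heq (Sum.inr i)
    simp [Matrix.fromBlocks_mulVec, Matrix.neg_mulVec, Matrix.zero_mulVec] at h
    simp only [Pi.sub_apply, Pi.smul_apply, smul_eq_mul]
    linarith
  -- dot products are zero
  have hyw0 : y ⬝ᵥ w = 0 ∧ x ⬝ᵥ v = 0 := by
    have h1 : 0 ≤ y ⬝ᵥ w := Finset.sum_nonneg fun i _ => mul_nonneg (hy i) (hw i)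
    have h2 : 0 ≤ x ⬝ᵥ v := Finset.sum_nonneg fun i _ => mul_nonneg (hx i) (hv i)
    constructor <;> linarith
  -- z = y - l • x is zero
  have hz : y = l • x := by
    by_contra hne
    set z : Fin n → ℝ := y - l • x with hzdef
    have hzne : z ≠ 0 := by
      intro h0
      exact hne (by rw [← sub_eq_zero]; exact h0)
    have hvz : v = C.mulVec z := by
      rw [hv', hzdef, Matrix.mulVec_sub, Matrix.mulVec_smul]
    have hpos := hC.dotProduct_mulVec_pos hzne
    simp only [star_trivial, Matrix.neg_mulVec, dotProduct_neg] at hpos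
    -- hpos : 0 < -(z ⬝ᵥ C.mulVec z)
    have hzv : z ⬝ᵥ v = z ⬝ᵥ C.mulVec z := by rw [hvz]
    have hzv2 : z ⬝ᵥ v = y ⬝ᵥ v - l * (x ⬝ᵥ v) := by
      rw [hzdef, sub_dotProduct, smul_dotProduct, smul_eq_mul]
    have hyv : 0 ≤ y ⬝ᵥ v := Finset.sum_nonneg fun i _ => mul_nonneg (hy i) (hv i)
    rw [hyw0.2] at hzv2
    linarith [hzv ▸ hzv2]
  -- x ⬝ᵥ w = 0
  have hxw : x ⬝ᵥ w = 0 := by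
    rcases eq_or_lt_of_le hl with hl0 | hl0
    · -- l = 0 ⇒ y = 0, w = C x
      have hy0 : y = (0 : Fin n → ℝ) := by rw [hz, ← hl0, zero_smul]
      have hwC : w = C.mulVec x := by
        rw [hw', hy0, ← hl0]; simp
      have h1 : 0 ≤ x ⬝ᵥ w := Finset.sum_nonneg fun i _ => mul_nonneg (hx i) (hw i)
      have h2 := hC.posSemidef.dotProduct_mulVec_nonneg x
      simp only [star_trivial, Matrix.neg_mulVec, dotProduct_neg, RCLike.re_to_real] at h2
      rw [hwC]
      linarith [hwC ▸ h1]
    · have : l * (x ⬝ᵥ w) = 0 := by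
        have := hyw0.1
        rw [hz, smul_dotProduct, smul_eq_mul] at this
        exact this
      exact (mul_eq_zero.mp this).resolve_left (ne_of_gt hl0)
  -- w in terms of x
  have hwx : w = l ^ 2 • A.mulVec x + l • B.mulVec x + C.mulVec x := by
    rw [hw', hz, Matrix.mulVec_smul, Matrix.mulVec_smul, smul_smul, ← sq]
  have hwbar : (l ^ 2 • A.mulVec ((1 + l) • x) + l • B.mulVec ((1 + l) • x)
      + C.mulVec ((1 + l) • x)) = (1 + l) • w := by
    rw [hwx]
    simp only [Matrix.mulVec_smul, smul_add, smul_comm (1 + l)]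
  have hl1 : (0:ℝ) < 1 + l := by linarith
  refine ⟨?_, ?_, ?_, ?_⟩
  · intro i
    simpa using mul_nonneg hl1.le (hx i)
  · intro i
    rw [hwbar]
    simpa using mul_nonneg hl1.le (hw i)
  · rw [hwbar, smul_dotProduct, dotProduct_smul, hxw]
    simp
  · have hsy : ∑ i, y i = l * ∑ i, x i := by
      rw [hz]; simp [Finset.mul_sum]
    have : ∑ i, ((1 + l) • x) i = (1 + l) * ∑ i, x i := by
      simp [Finset.mul_sum]
    rw [this]; linarith [hsum, hsy]
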